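/- (The one-loop soliton satisfies the equation, Section 3, eq. (3.9).) Let ρ > 0 and y₀ ∈ ℝ, and define ê(y,t) = exp(−√3·ρ·(y + t/ρ² + y₀)) and q̂(y,t) = (1 + 2ê + ê²)/(1 − 4ê + ê²) = (1+ê)²/(1−4ê+ê²). Then at every point (y,t) with 1 − 4ê(y,t) + ê(y,t)² ≠ 0, the function q̂ satisfies ∂ₜ(∂_y q̂ / q̂) = q̂² − 1/q̂. -/

import Mathlib

noncomputable section

/-- The exponential soliton profile `ê(y,t) = exp(−√3·ρ·(y + t/ρ² + y₀))`. -/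
def ee (ρ y₀ : ℝ) (y t : ℝ) : ℝ :=
  Real.exp (-Real.sqrt 3 * ρ * (y + t / ρ ^ 2 + y₀))

/-- The one-loop soliton profile `q̂ = (1+ê)²/(1−4ê+ê²)`. -/
def qh (ρ y₀ : ℝ) (y t : ℝ) : ℝ :=
  (1 + ee ρ y₀ y t) ^ 2 / (1 - 4 * ee ρ y₀ y t + ee ρ y₀ y t ^ 2)

lemma hasDerivAt_ee_y (ρ y₀ t y : ℝ) :
    HasDerivAt (fun y' => ee ρ y₀ y' t) (-Real.sqrt 3 * ρ * ee ρ y₀ y t) y := by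
  have h : HasDerivAt (fun y' : ℝ => -Real.sqrt 3 * ρ * (y' + t / ρ ^ 2 + y₀))
      (-Real.sqrt 3 * ρ) y := by
    simpa using (((hasDerivAt_id y).add_const (t / ρ ^ 2)).add_const y₀).const_mul
      (-Real.sqrt 3 * ρ)
  simpa [ee, mul_comm] using h.exp

lemma hasDerivAt_ee_t (ρ y₀ y t : ℝ) :
    HasDerivAt (fun t' => ee ρ y₀ y t') (-Real.sqrt 3 * ρ / ρ ^ 2 * ee ρ y₀ y t) t := by
  have h : HasDerivAt (fun t' : ℝ => -Real.sqrt 3 * ρ * (y + t' / ρ ^ 2 + y₀))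
      (-Real.sqrt 3 * ρ / ρ ^ 2) t := by
    have h0 : HasDerivAt (fun t' : ℝ => y + t' / ρ ^ 2 + y₀) (1 / ρ ^ 2) t := by
      simpa using (((hasDerivAt_id t).div_const (ρ ^ 2)).const_add y).add_const y₀
    have := h0.const_mul (-Real.sqrt 3 * ρ)
    convert this using 1
    all_goals first | rfl | ring
  simpa [ee, mul_comm] using h.exp

lemma hasDerivAt_qh_y (ρ y₀ : ℝ) (y t : ℝ)
    (hD : 1 - 4 * ee ρ y₀ y t + ee ρ y₀ y t ^ 2 ≠ 0) :
    HasDerivAt (fun y' => qh ρ y₀ y' t)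
      ((2 * (1 + ee ρ y₀ y t) * (-Real.sqrt 3 * ρ * ee ρ y₀ y t) *
          (1 - 4 * ee ρ y₀ y t + ee ρ y₀ y t ^ 2)
        - (1 + ee ρ y₀ y t) ^ 2 *
          (-4 * (-Real.sqrt 3 * ρ * ee ρ y₀ y t) +
            2 * ee ρ y₀ y t * (-Real.sqrt 3 * ρ * ee ρ y₀ y t))) /
        (1 - 4 * ee ρ y₀ y t + ee ρ y₀ y t ^ 2) ^ 2) y := by
  have he := hasDerivAt_ee_y ρ y₀ t y
  have hN : HasDerivAt (fun y' => (1 + ee ρ y₀ y' t) ^ 2)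
      (2 * (1 + ee ρ y₀ y t) * (-Real.sqrt 3 * ρ * ee ρ y₀ y t)) y := by
    have := (he.const_add 1).pow 2
    convert this using 1
    all_goals first | rfl | ring
  have hD' : HasDerivAt (fun y' => 1 - 4 * ee ρ y₀ y' t + ee ρ y₀ y' t ^ 2)
      (-4 * (-Real.sqrt 3 * ρ * ee ρ y₀ y t) +
        2 * ee ρ y₀ y t * (-Real.sqrt 3 * ρ * ee ρ y₀ y t)) y := by
    have h1 := ((he.const_mul 4).const_sub 1).add (he.pow 2)
    convert h1 using 1
    all_goals first | rfl | ring
  exact hN.div hD' hD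

/-- **The one-loop soliton satisfies the equation (Section 3, eq. (3.9)).** For
`ρ > 0`, `y₀ ∈ ℝ`, at every point where `1 − 4ê + ê² ≠ 0`, the function
`q̂ = (1+ê)²/(1−4ê+ê²)` satisfies `∂ₜ(∂_y q̂ / q̂) = q̂² − 1/q̂`. -/
theorem one_loop_soliton (ρ y₀ : ℝ) (hρ : 0 < ρ) :
    ∀ y t : ℝ, 1 - 4 * ee ρ y₀ y t + ee ρ y₀ y t ^ 2 ≠ 0 →
      deriv (fun t' => deriv (fun y' => qh ρ y₀ y' t') y / qh ρ y₀ y t') t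
        = qh ρ y₀ y t ^ 2 - 1 / qh ρ y₀ y t := by
  intro y t hD
  have hρ0 : ρ ≠ 0 := ne_of_gt hρ
  have hepos : ∀ t', 0 < ee ρ y₀ y t' := fun _ => Real.exp_pos _
  have h1e : ∀ t', (1:ℝ) + ee ρ y₀ y t' ≠ 0 := fun t' => by
    have := hepos t'; positivity
  set G : ℝ → ℝ := fun t' =>
    -6 * (Real.sqrt 3 * ρ) * ee ρ y₀ y t' * (1 - ee ρ y₀ y t') /
      ((1 - 4 * ee ρ y₀ y t' + ee ρ y₀ y t' ^ 2) * (1 + ee ρ y₀ y t')) with hG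
  have hcont : Continuous (fun t' => 1 - 4 * ee ρ y₀ y t' + ee ρ y₀ y t' ^ 2) := by
    unfold ee; fun_prop
  have hopen : ∀ᶠ t' in nhds t, 1 - 4 * ee ρ y₀ y t' + ee ρ y₀ y t' ^ 2 ≠ 0 :=
    hcont.continuousAt.eventually_ne hD
  have heq : (fun t' => deriv (fun y' => qh ρ y₀ y' t') y / qh ρ y₀ y t') =ᶠ[nhds t] G := by
    filter_upwards [hopen] with t' hD'
    rw [(hasDerivAt_qh_y ρ y₀ y t' hD').deriv]
    have hq : qh ρ y₀ y t' ≠ 0 := div_ne_zero (pow_ne_zero 2 (h1e t')) hD'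
    rw [hG]
    simp only [qh]
    field_simp [hD', h1e t']
    ring
  rw [heq.deriv_eq]
  have het := hasDerivAt_ee_t ρ y₀ y t
  have hnum : HasDerivAt
      (fun t' => -6 * (Real.sqrt 3 * ρ) * ee ρ y₀ y t' * (1 - ee ρ y₀ y t'))
      (-6 * (Real.sqrt 3 * ρ) *
        ((-Real.sqrt 3 * ρ / ρ ^ 2 * ee ρ y₀ y t) * (1 - ee ρ y₀ y t)
          + ee ρ y₀ y t * (-(-Real.sqrt 3 * ρ / ρ ^ 2 * ee ρ y₀ y t)))) t := by
    have h1 := (het.const_mul (-6 * (Real.sqrt 3 * ρ))).mul (het.const_sub 1)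
    convert h1 using 1
    all_goals first | rfl | ring
  have hden : HasDerivAt
      (fun t' => (1 - 4 * ee ρ y₀ y t' + ee ρ y₀ y t' ^ 2) * (1 + ee ρ y₀ y t'))
      ((-4 * (-Real.sqrt 3 * ρ / ρ ^ 2 * ee ρ y₀ y t)
          + 2 * ee ρ y₀ y t * (-Real.sqrt 3 * ρ / ρ ^ 2 * ee ρ y₀ y t)) * (1 + ee ρ y₀ y t)
        + (1 - 4 * ee ρ y₀ y t + ee ρ y₀ y t ^ 2) *
            (-Real.sqrt 3 * ρ / ρ ^ 2 * ee ρ y₀ y t)) t := by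
    have h1 := (((het.const_mul 4).const_sub 1).add (het.pow 2)).mul (het.const_add 1)
    convert h1 using 1
    all_goals first | rfl | (simp only [Pi.add_apply, Pi.pow_apply]; ring)
  have hGd := hnum.div hden (mul_ne_zero hD (h1e t))
  rw [hG]
  erw [hGd.deriv]
  have h3 : Real.sqrt 3 * Real.sqrt 3 = 3 := Real.mul_self_sqrt (by norm_num)
  simp only [qh]
  field_simp [hD, h1e t]
  ring_nf
  rw [Real.sq_sqrt (by norm_num : (3:ℝ) ≥ 0)]
  ring

end
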